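/- Let F(x) = d₁x + α and G(x) = d₂x + β with d₁, d₂ ∈ ℤ, d₁ ≠ d₂, and suppose κ := β(d₁-1) - α(d₂-1) ∈ ℤ. Then for every x in C = {(m + β - α)/(d₁ - d₂) : m ∈ ℤ} and every integer s ≥ 1, F^s(x) - G^s(x) ∈ ℤ. -/
import Mathlib

def seqA (d : ℤ) : ℕ → ℤ
  | 0 => 0
  | (s+1) => d * seqA d s + 1

def seqC (d₁ d₂ : ℤ) : ℕ → ℤ
  | 0 => 0
  | (s+1) => d₁ * seqC d₁ d₂ s + d₂ ^ s

def seqW (d₁ d₂ : ℤ) : ℕ → ℤ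
  | 0 => 0
  | (s+1) => d₁ * seqW d₁ d₂ s + seqA d₂ s

lemma seqA_spec (d : ℤ) : ∀ s : ℕ, d ^ s - 1 = (d - 1) * seqA d s := by
  intro s
  induction s with
  | zero => simp [seqA]
  | succ n ih => rw [seqA]; linear_combination d * ih

lemma seqC_spec (d₁ d₂ : ℤ) : ∀ s : ℕ, d₁ ^ s - d₂ ^ s = (d₁ - d₂) * seqC d₁ d₂ s := by
  intro s
  induction s with
  | zero => simp [seqC]
  | succ n ih => rw [seqC]; linear_combination d₁ * ih

lemma seqW_spec1 (d₁ d₂ : ℤ) :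
    ∀ s : ℕ, seqC d₁ d₂ s - seqA d₁ s = (d₂ - 1) * seqW d₁ d₂ s := by
  intro s
  induction s with
  | zero => simp [seqA, seqC, seqW]
  | succ n ih =>
    rw [seqC, seqA, seqW]
    have h := seqA_spec d₂ n
    linear_combination d₁ * ih + h

lemma seqW_spec2 (d₁ d₂ : ℤ) :
    ∀ s : ℕ, seqC d₁ d₂ s - seqA d₂ s = (d₁ - 1) * seqW d₁ d₂ s := by
  intro s
  induction s with
  | zero => simp [seqA, seqC, seqW]
  | succ n ih =>
    rw [seqC, seqA, seqW]
    have h := seqA_spec d₂ n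
    linear_combination d₁ * ih + h

theorem iterates_diff_int_on_C (d₁ d₂ : ℤ) (hd : d₁ ≠ d₂) (α β : ℝ)
    (κ : ℤ) (hκ : (κ : ℝ) = β * (d₁ - 1) - α * (d₂ - 1))
    (F G : ℝ → ℝ) (hF : ∀ x, F x = d₁ * x + α) (hG : ∀ x, G x = d₂ * x + β)
    (x : ℝ) (hx : ∃ m : ℤ, x = (m + β - α) / (d₁ - d₂)) :
    ∀ s : ℕ, 1 ≤ s → ∃ k : ℤ, F^[s] x - G^[s] x = k := by
  obtain ⟨m, hm⟩ := hx
  have hdR : (d₁ : ℝ) - d₂ ≠ 0 := by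
    intro h
    apply hd
    exact_mod_cast sub_eq_zero.mp h
  have hFs : ∀ s : ℕ, F^[s] x = (d₁ : ℝ) ^ s * x + α * (seqA d₁ s : ℤ) := by
    intro s
    induction s with
    | zero => simp [seqA]
    | succ n ih =>
      rw [Function.iterate_succ_apply', ih, hF, seqA]
      push_cast
      ring
  have hGs : ∀ s : ℕ, G^[s] x = (d₂ : ℝ) ^ s * x + β * (seqA d₂ s : ℤ) := by
    intro s
    induction s with
    | zero => simp [seqA]
    | succ n ih =>
      rw [Function.iterate_succ_apply', ih, hG, seqA]
      push_cast
      ring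
  intro s _
  refine ⟨seqC d₁ d₂ s * m + κ * seqW d₁ d₂ s, ?_⟩
  have hC : ((d₁ : ℝ) ^ s - (d₂ : ℝ) ^ s) = ((d₁ : ℝ) - d₂) * (seqC d₁ d₂ s : ℤ) := by
    exact_mod_cast congrArg (Int.cast : ℤ → ℝ) (seqC_spec d₁ d₂ s)
  have h1 : ((seqC d₁ d₂ s : ℝ) - (seqA d₁ s : ℤ)) = ((d₂ : ℝ) - 1) * (seqW d₁ d₂ s : ℤ) := by
    exact_mod_cast congrArg (Int.cast : ℤ → ℝ) (seqW_spec1 d₁ d₂ s)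
  have h2 : ((seqC d₁ d₂ s : ℝ) - (seqA d₂ s : ℤ)) = ((d₁ : ℝ) - 1) * (seqW d₁ d₂ s : ℤ) := by
    exact_mod_cast congrArg (Int.cast : ℤ → ℝ) (seqW_spec2 d₁ d₂ s)
  rw [hFs, hGs, hm]
  push_cast
  field_simp
  linear_combination ((m : ℝ) + β - α) * hC +
    ((d₁ : ℝ) - d₂) * (β * h2 - α * h1 - (seqW d₁ d₂ s : ℝ) * hκ)
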